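/- arXiv:1608.04299 — 3 statements merged into one kernel-verified Lean document; each statement's English description precedes it below -/
import Mathlib

section
/- For every 0 ≤ ε < 1, the Ptolemy constant of the ellipse satisfies the lower bound P(ε) ≥ (1/2)·(1/√(1 − ε²) + √(1 − ε²)) = (2 − ε²)/(2√(1 − ε²)). -/
open Real

/-- The point `(cos θ, √(1 - ε²) · sin θ)` on the ellipse `x² + y²/(1-ε²) = 1`. -/
noncomputable def ellipsePoint (ε θ : ℝ) : EuclideanSpace ℝ (Fin 2) :=
  WithLp.toLp 2 ![Real.cos θ, Real.sqrt (1 - ε ^ 2) * Real.sin θ]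

/-- The Ptolemy ratio of four points in the Euclidean plane. -/
noncomputable def ptolemyRatio (v₁ v₂ v₃ v₄ : EuclideanSpace ℝ (Fin 2)) : ℝ :=
  (‖v₁ - v₂‖ * ‖v₃ - v₄‖ + ‖v₁ - v₄‖ * ‖v₂ - v₃‖) / (‖v₁ - v₃‖ * ‖v₂ - v₄‖)

/-- The Ptolemy constant of the ellipse of eccentricity `ε`: the supremum of the
Ptolemy ratio over all `0 ≤ θ₁ < θ₂ < θ₃ < θ₄ < 2π`. -/
noncomputable def ellipsePtolemyConst (ε : ℝ) : ℝ :=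
  sSup {r : ℝ | ∃ θ₁ θ₂ θ₃ θ₄ : ℝ, 0 ≤ θ₁ ∧ θ₁ < θ₂ ∧ θ₂ < θ₃ ∧ θ₃ < θ₄ ∧ θ₄ < 2 * π ∧
    r = ptolemyRatio (ellipsePoint ε θ₁) (ellipsePoint ε θ₂) (ellipsePoint ε θ₃)
        (ellipsePoint ε θ₄)}

lemma trigId (m d e2 : ℝ) :
    (Real.cos (m + d) - Real.cos (m - d)) ^ 2
      + (1 - e2) * (Real.sin (m + d) - Real.sin (m - d)) ^ 2
    = 4 * Real.sin d ^ 2 * (1 - e2 + e2 * Real.sin m ^ 2) := by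
  simp only [Real.cos_add, Real.cos_sub, Real.sin_add, Real.sin_sub]
  linear_combination (4 * Real.sin d ^ 2 * (1 - e2)) * (Real.sin_sq_add_cos_sq m)

lemma trigId' (θ φ e2 : ℝ) :
    (Real.cos θ - Real.cos φ) ^ 2 + (1 - e2) * (Real.sin θ - Real.sin φ) ^ 2
    = 4 * Real.sin ((θ - φ) / 2) ^ 2 * (1 - e2 + e2 * Real.sin ((θ + φ) / 2) ^ 2) := by
  have h := trigId ((θ + φ) / 2) ((θ - φ) / 2) e2
  have h1 : (θ + φ) / 2 + (θ - φ) / 2 = θ := by ring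
  have h2 : (θ + φ) / 2 - (θ - φ) / 2 = φ := by ring
  rw [h1, h2] at h; exact h

lemma ptolId (a b c : ℝ) :
    Real.sin a * Real.sin c + Real.sin (a + b + c) * Real.sin b
      = Real.sin (a + b) * Real.sin (b + c) := by
  simp only [Real.sin_add, Real.cos_add]
  linear_combination (-(Real.sin a * Real.sin c)) * (Real.sin_sq_add_cos_sq b)

lemma normValLemma (ε θ φ : ℝ) (hε : ε ^ 2 ≤ 1) :
    ‖ellipsePoint ε θ - ellipsePoint ε φ‖
      = Real.sqrt ((Real.cos θ - Real.cos φ) ^ 2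
          + (1 - ε ^ 2) * (Real.sin θ - Real.sin φ) ^ 2) := by
  have hs2 : Real.sqrt (1 - ε ^ 2) ^ 2 = 1 - ε ^ 2 := Real.sq_sqrt (by linarith)
  have h1 : ‖ellipsePoint ε θ - ellipsePoint ε φ‖ ^ 2 =
      (Real.cos θ - Real.cos φ) ^ 2
        + (1 - ε ^ 2) * (Real.sin θ - Real.sin φ) ^ 2 := by
    rw [ellipsePoint, ellipsePoint, EuclideanSpace.norm_eq, Real.sq_sqrt]
    · simp [Fin.sum_univ_two]
      linear_combination (Real.sin θ - Real.sin φ) ^ 2 * hs2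
    · positivity
  rw [← Real.sqrt_sq (norm_nonneg (ellipsePoint ε θ - ellipsePoint ε φ)), h1]

lemma distFormula (ε θ φ : ℝ) (hε : ε ^ 2 ≤ 1) :
    ‖ellipsePoint ε θ - ellipsePoint ε φ‖
      = 2 * |Real.sin ((θ - φ) / 2)|
        * Real.sqrt (1 - ε ^ 2 + ε ^ 2 * Real.sin ((θ + φ) / 2) ^ 2) := by
  have harg : (0:ℝ) ≤ 1 - ε ^ 2 + ε ^ 2 * Real.sin ((θ + φ) / 2) ^ 2 := by
    nlinarith [sq_nonneg (ε * Real.sin ((θ + φ) / 2))]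
  rw [normValLemma ε θ φ hε, trigId']
  rw [show 4 * Real.sin ((θ - φ) / 2) ^ 2 * (1 - ε ^ 2 + ε ^ 2 * Real.sin ((θ + φ) / 2) ^ 2)
      = (2 * |Real.sin ((θ - φ) / 2)|) ^ 2 * (1 - ε ^ 2 + ε ^ 2 * Real.sin ((θ + φ) / 2) ^ 2) by
    rw [mul_pow, sq_abs]; ring]
  rw [Real.sqrt_mul (by positivity), Real.sqrt_sq (by positivity)]

lemma distUpper (ε θ φ : ℝ) (hε : ε ^ 2 ≤ 1) :
    ‖ellipsePoint ε θ - ellipsePoint ε φ‖ ≤ 2 * |Real.sin ((θ - φ) / 2)| := by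
  rw [distFormula ε θ φ hε]
  have h1 : Real.sqrt (1 - ε ^ 2 + ε ^ 2 * Real.sin ((θ + φ) / 2) ^ 2) ≤ 1 := by
    calc Real.sqrt (1 - ε ^ 2 + ε ^ 2 * Real.sin ((θ + φ) / 2) ^ 2)
        ≤ Real.sqrt 1 := Real.sqrt_le_sqrt
          (by nlinarith [Real.sin_sq_le_one ((θ + φ) / 2), sq_nonneg ε])
      _ = 1 := Real.sqrt_one
  calc 2 * |Real.sin ((θ - φ) / 2)| * Real.sqrt (1 - ε ^ 2 + ε ^ 2 * Real.sin ((θ + φ) / 2) ^ 2)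
      ≤ 2 * |Real.sin ((θ - φ) / 2)| * 1 :=
        mul_le_mul_of_nonneg_left h1 (by positivity)
    _ = 2 * |Real.sin ((θ - φ) / 2)| := by ring

lemma distLower (ε θ φ : ℝ) (hε : ε ^ 2 ≤ 1) :
    2 * |Real.sin ((θ - φ) / 2)| * Real.sqrt (1 - ε ^ 2)
      ≤ ‖ellipsePoint ε θ - ellipsePoint ε φ‖ := by
  rw [distFormula ε θ φ hε]
  apply mul_le_mul_of_nonneg_left _ (by positivity)
  apply Real.sqrt_le_sqrt
  nlinarith [sq_nonneg (ε * Real.sin ((θ + φ) / 2))]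

/-- Pure real-arithmetic core of the upper bound on the Ptolemy ratio. -/
lemma ratioArith (b2 sA sB sC sAB sBC sABC q d12 d13 d14 d23 d24 d34 : ℝ)
    (hb2 : 0 < b2) (hq2 : q ^ 2 = b2) (hqpos : 0 < q)
    (hsA : 0 < sA) (hsB : 0 < sB) (hsC : 0 < sC)
    (hsAB : 0 < sAB) (hsBC : 0 < sBC) (hsABC : 0 < sABC)
    (hptol : sA * sC + sABC * sB = sAB * sBC)
    (hd12 : 0 ≤ d12) (hd14 : 0 ≤ d14)
    (u12 : d12 ≤ 2 * sA) (u23 : d23 ≤ 2 * sB) (u34 : d34 ≤ 2 * sC)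
    (u14 : d14 ≤ 2 * sABC)
    (l13 : 2 * sAB * q ≤ d13) (l24 : 2 * sBC * q ≤ d24) :
    (d12 * d34 + d14 * d23) / (d13 * d24) ≤ 1 / b2 := by
  have h13 : 0 < d13 := lt_of_lt_of_le (by positivity) l13
  have h24 : 0 < d24 := lt_of_lt_of_le (by positivity) l24
  rw [div_le_div_iff₀ (by positivity) hb2]
  have hN : d12 * d34 + d14 * d23 ≤ 4 * (sAB * sBC) := by nlinarith
  have hD : 4 * b2 * (sAB * sBC) ≤ d13 * d24 := by
    have hprod : (2 * sAB * q) * (2 * sBC * q) ≤ d13 * d24 :=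
      mul_le_mul l13 l24 (by positivity) (le_of_lt h13)
    calc 4 * b2 * (sAB * sBC) = (2 * sAB * q) * (2 * sBC * q) := by
          rw [← hq2]; ring
      _ ≤ d13 * d24 := hprod
  nlinarith [mul_le_mul_of_nonneg_right hN (le_of_lt hb2)]

lemma ratioBound (ε : ℝ) (hε0 : 0 ≤ ε) (hε1 : ε < 1) (θ₁ θ₂ θ₃ θ₄ : ℝ)
    (h0 : 0 ≤ θ₁) (h12 : θ₁ < θ₂) (h23 : θ₂ < θ₃) (h34 : θ₃ < θ₄) (h4 : θ₄ < 2 * π) :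
    ptolemyRatio (ellipsePoint ε θ₁) (ellipsePoint ε θ₂) (ellipsePoint ε θ₃)
        (ellipsePoint ε θ₄) ≤ 1 / (1 - ε ^ 2) := by
  have hb2 : (0:ℝ) < 1 - ε ^ 2 := by nlinarith
  have hε2 : ε ^ 2 ≤ 1 := by linarith
  have hπ : 0 < π := Real.pi_pos
  obtain ⟨A, hA⟩ : ∃ A : ℝ, A = (θ₂ - θ₁) / 2 := ⟨_, rfl⟩
  obtain ⟨B, hB⟩ : ∃ B : ℝ, B = (θ₃ - θ₂) / 2 := ⟨_, rfl⟩
  obtain ⟨C, hC⟩ : ∃ C : ℝ, C = (θ₄ - θ₃) / 2 := ⟨_, rfl⟩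
  have hApos : 0 < Real.sin A :=
    Real.sin_pos_of_pos_of_lt_pi (by rw [hA]; linarith) (by rw [hA]; linarith)
  have hBpos : 0 < Real.sin B :=
    Real.sin_pos_of_pos_of_lt_pi (by rw [hB]; linarith) (by rw [hB]; linarith)
  have hCpos : 0 < Real.sin C :=
    Real.sin_pos_of_pos_of_lt_pi (by rw [hC]; linarith) (by rw [hC]; linarith)
  have hABpos : 0 < Real.sin (A + B) :=
    Real.sin_pos_of_pos_of_lt_pi (by rw [hA, hB]; linarith) (by rw [hA, hB]; linarith)
  have hBCpos : 0 < Real.sin (B + C) :=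
    Real.sin_pos_of_pos_of_lt_pi (by rw [hB, hC]; linarith) (by rw [hB, hC]; linarith)
  have hABCpos : 0 < Real.sin (A + B + C) :=
    Real.sin_pos_of_pos_of_lt_pi (by rw [hA, hB, hC]; linarith)
      (by rw [hA, hB, hC]; linarith)
  have habs : ∀ x : ℝ, 0 < Real.sin x → |Real.sin (-x)| = Real.sin x := fun x hx => by
    rw [Real.sin_neg, abs_neg, abs_of_pos hx]
  have e12 : |Real.sin ((θ₁ - θ₂) / 2)| = Real.sin A := by
    rw [show (θ₁ - θ₂) / 2 = -A by rw [hA]; ring]; exact habs A hApos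
  have e23 : |Real.sin ((θ₂ - θ₃) / 2)| = Real.sin B := by
    rw [show (θ₂ - θ₃) / 2 = -B by rw [hB]; ring]; exact habs B hBpos
  have e34 : |Real.sin ((θ₃ - θ₄) / 2)| = Real.sin C := by
    rw [show (θ₃ - θ₄) / 2 = -C by rw [hC]; ring]; exact habs C hCpos
  have e13 : |Real.sin ((θ₁ - θ₃) / 2)| = Real.sin (A + B) := by
    rw [show (θ₁ - θ₃) / 2 = -(A + B) by rw [hA, hB]; ring]; exact habs _ hABpos
  have e24 : |Real.sin ((θ₂ - θ₄) / 2)| = Real.sin (B + C) := by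
    rw [show (θ₂ - θ₄) / 2 = -(B + C) by rw [hB, hC]; ring]; exact habs _ hBCpos
  have e14 : |Real.sin ((θ₁ - θ₄) / 2)| = Real.sin (A + B + C) := by
    rw [show (θ₁ - θ₄) / 2 = -(A + B + C) by rw [hA, hB, hC]; ring]; exact habs _ hABCpos
  have u12 := distUpper ε θ₁ θ₂ hε2; rw [e12] at u12
  have u23 := distUpper ε θ₂ θ₃ hε2; rw [e23] at u23
  have u34 := distUpper ε θ₃ θ₄ hε2; rw [e34] at u34
  have u14 := distUpper ε θ₁ θ₄ hε2; rw [e14] at u14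
  have l13 := distLower ε θ₁ θ₃ hε2; rw [e13] at l13
  have l24 := distLower ε θ₂ θ₄ hε2; rw [e24] at l24
  rw [ptolemyRatio]
  exact ratioArith (1 - ε ^ 2) (Real.sin A) (Real.sin B) (Real.sin C)
    (Real.sin (A + B)) (Real.sin (B + C)) (Real.sin (A + B + C))
    (Real.sqrt (1 - ε ^ 2)) _ _ _ _ _ _
    hb2 (Real.sq_sqrt (le_of_lt hb2)) (Real.sqrt_pos.mpr hb2)
    hApos hBpos hCpos hABpos hBCpos hABCpos (ptolId A B C)
    (norm_nonneg _) (norm_nonneg _) u12 u23 u34 u14 l13 l24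

theorem stmt1 (ε : ℝ) (hε0 : 0 ≤ ε) (hε1 : ε < 1) :
    ellipsePtolemyConst ε ≥
      (1 / 2) * (1 / Real.sqrt (1 - ε ^ 2) + Real.sqrt (1 - ε ^ 2)) ∧
    (1 / 2) * (1 / Real.sqrt (1 - ε ^ 2) + Real.sqrt (1 - ε ^ 2)) =
      (2 - ε ^ 2) / (2 * Real.sqrt (1 - ε ^ 2)) := by
  have hb2 : (0:ℝ) < 1 - ε ^ 2 := by nlinarith
  have hε2 : ε ^ 2 ≤ 1 := by linarith
  have hspos : 0 < Real.sqrt (1 - ε ^ 2) := Real.sqrt_pos.mpr hb2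
  have hs2 : Real.sqrt (1 - ε ^ 2) ^ 2 = 1 - ε ^ 2 := Real.sq_sqrt (le_of_lt hb2)
  have hπ : 0 < π := Real.pi_pos
  have heq : (1 / 2) * (1 / Real.sqrt (1 - ε ^ 2) + Real.sqrt (1 - ε ^ 2))
      = (2 - ε ^ 2) / (2 * Real.sqrt (1 - ε ^ 2)) := by
    field_simp
    linarith [hs2]
  refine ⟨?_, heq⟩
  have hc32 : Real.cos (3 * π / 2) = 0 := by
    rw [show (3:ℝ) * π / 2 = π + π / 2 by ring, Real.cos_add]; simp
  have hs32 : Real.sin (3 * π / 2) = -1 := by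
    rw [show (3:ℝ) * π / 2 = π + π / 2 by ring, Real.sin_add]; simp
  have d12 : ‖ellipsePoint ε 0 - ellipsePoint ε (π / 2)‖ = Real.sqrt (2 - ε ^ 2) := by
    rw [normValLemma ε _ _ hε2]
    norm_num
    congr 1; ring
  have d23 : ‖ellipsePoint ε (π / 2) - ellipsePoint ε π‖ = Real.sqrt (2 - ε ^ 2) := by
    rw [normValLemma ε _ _ hε2]
    norm_num
    congr 1; ring
  have d34 : ‖ellipsePoint ε π - ellipsePoint ε (3 * π / 2)‖ = Real.sqrt (2 - ε ^ 2) := by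
    rw [normValLemma ε _ _ hε2, hc32, hs32]
    norm_num
    congr 1; ring
  have d14 : ‖ellipsePoint ε 0 - ellipsePoint ε (3 * π / 2)‖ = Real.sqrt (2 - ε ^ 2) := by
    rw [normValLemma ε _ _ hε2, hc32, hs32]
    norm_num
    congr 1; ring
  have d13 : ‖ellipsePoint ε 0 - ellipsePoint ε π‖ = 2 := by
    rw [normValLemma ε _ _ hε2]
    norm_num
  have d24 : ‖ellipsePoint ε (π / 2) - ellipsePoint ε (3 * π / 2)‖
      = 2 * Real.sqrt (1 - ε ^ 2) := by
    rw [normValLemma ε _ _ hε2, hc32, hs32]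
    norm_num
    ring
  have hval : ptolemyRatio (ellipsePoint ε 0) (ellipsePoint ε (π / 2))
      (ellipsePoint ε π) (ellipsePoint ε (3 * π / 2))
      = (1 / 2) * (1 / Real.sqrt (1 - ε ^ 2) + Real.sqrt (1 - ε ^ 2)) := by
    rw [ptolemyRatio, d12, d23, d34, d14, d13, d24,
      Real.mul_self_sqrt (by linarith : (0:ℝ) ≤ 2 - ε ^ 2)]
    rw [heq]
    rw [div_eq_div_iff (by positivity) (by positivity)]
    ring
  have hmem : ptolemyRatio (ellipsePoint ε 0) (ellipsePoint ε (π / 2))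
      (ellipsePoint ε π) (ellipsePoint ε (3 * π / 2)) ∈
      {r : ℝ | ∃ θ₁ θ₂ θ₃ θ₄ : ℝ, 0 ≤ θ₁ ∧ θ₁ < θ₂ ∧ θ₂ < θ₃ ∧ θ₃ < θ₄ ∧ θ₄ < 2 * π ∧
        r = ptolemyRatio (ellipsePoint ε θ₁) (ellipsePoint ε θ₂) (ellipsePoint ε θ₃)
            (ellipsePoint ε θ₄)} :=
    ⟨0, π / 2, π, 3 * π / 2, le_refl 0, by linarith, by linarith, by linarith,
      by linarith, rfl⟩
  have hbdd : BddAbove {r : ℝ | ∃ θ₁ θ₂ θ₃ θ₄ : ℝ,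
      0 ≤ θ₁ ∧ θ₁ < θ₂ ∧ θ₂ < θ₃ ∧ θ₃ < θ₄ ∧ θ₄ < 2 * π ∧
      r = ptolemyRatio (ellipsePoint ε θ₁) (ellipsePoint ε θ₂) (ellipsePoint ε θ₃)
          (ellipsePoint ε θ₄)} := by
    refine ⟨1 / (1 - ε ^ 2), fun r hr => ?_⟩
    obtain ⟨θ₁, θ₂, θ₃, θ₄, h0, h12, h23, h34, h4, hreq⟩ := hr
    rw [hreq]
    exact ratioBound ε hε0 hε1 θ₁ θ₂ θ₃ θ₄ h0 h12 h23 h34 h4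
  have := le_csSup hbdd hmem
  rw [hval] at this
  exact this
end

section
/- For every 0 ≤ ε < 1, the Ptolemy constant of the ellipse satisfies the upper bound P(ε) ≤ 1/sin(π√(1 − ε²)/2). -/
open Real

set_option maxHeartbeats 1000000

section Aux

private lemma ellGnonneg (b z : ℝ) (hb : b^2 ≤ 1) :
    0 ≤ (1+b^2)/2 - (1-b^2)/2 * Real.cos z := by
  nlinarith [Real.neg_one_le_cos z, Real.cos_le_one z]

private lemma ellChordSq (b x y : ℝ) :
    (Real.cos x - Real.cos y)^2 + (b * Real.sin x - b * Real.sin y)^2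
      = 4 * Real.sin ((y-x)/2)^2 * ((1+b^2)/2 - (1-b^2)/2 * Real.cos (x+y)) := by
  have h1 : Real.sin ((y-x)/2) = -Real.sin ((x-y)/2) := by
    rw [show (y-x)/2 = -((x-y)/2) by ring, Real.sin_neg]
  have h2 : Real.cos (x+y) = 2 * Real.cos ((x+y)/2)^2 - 1 := by
    have := Real.cos_two_mul ((x+y)/2)
    rw [show 2*((x+y)/2) = x+y by ring] at this
    exact this
  have h3 : b * Real.sin x - b * Real.sin y
      = b * (2 * Real.sin ((x-y)/2) * Real.cos ((x+y)/2)) := by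
    rw [← Real.sin_sub_sin]; ring
  have hS := Real.sin_sq_add_cos_sq ((x+y)/2)
  rw [Real.cos_sub_cos, h1, h2, h3]
  linear_combination (4 * Real.sin ((x-y)/2)^2) * hS

private lemma ellDform (b x y : ℝ) (h0 : x ≤ y) (h1 : y - x ≤ 2*π) :
    Real.sqrt ((Real.cos x - Real.cos y)^2 + (b * Real.sin x - b * Real.sin y)^2)
      = 2 * Real.sin ((y-x)/2)
        * Real.sqrt ((1+b^2)/2 - (1-b^2)/2 * Real.cos (x+y)) := by
  have hs : 0 ≤ Real.sin ((y-x)/2) :=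
    Real.sin_nonneg_of_nonneg_of_le_pi (by linarith) (by linarith [Real.pi_pos])
  rw [ellChordSq]
  rw [show (4:ℝ) * Real.sin ((y-x)/2)^2 * ((1+b^2)/2 - (1-b^2)/2*Real.cos (x+y))
      = (2*Real.sin ((y-x)/2))^2 * ((1+b^2)/2 - (1-b^2)/2*Real.cos (x+y)) by ring]
  rw [Real.sqrt_mul (sq_nonneg _), Real.sqrt_sq (by linarith)]

private lemma ellProdG (b p q r s : ℝ) (hp : p^2+q^2=1) (hr : r^2+s^2=1) :
    ((1+b^2)/2 - (1-b^2)/2*(p*r + q*s)) * ((1+b^2)/2 - (1-b^2)/2*(p*r - q*s))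
      = ((1+b^2)/2*p - (1-b^2)/2*r)^2 + b^2*q^2 := by
  linear_combination (((1-b^2)^2/4)*r^2 - ((1+b^2)/2)^2) * hp - ((1-b^2)^2/4)*q^2 * hr

private lemma ellGsplit (b m A : ℝ) (hb : b^2 ≤ 1) :
    Real.sqrt ((1+b^2)/2 - (1-b^2)/2 * Real.cos (m - A))
      * Real.sqrt ((1+b^2)/2 - (1-b^2)/2 * Real.cos (m + A))
    = Real.sqrt (((1+b^2)/2 * Real.cos m - (1-b^2)/2 * Real.cos A)^2
        + b^2 * Real.sin m ^ 2) := by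
  rw [← Real.sqrt_mul (ellGnonneg b (m-A) hb)]
  congr 1
  rw [Real.cos_sub, Real.cos_add]
  exact ellProdG b (Real.cos m) (Real.sin m) (Real.cos A) (Real.sin A)
    (Real.cos_sq_add_sin_sq m) (Real.cos_sq_add_sin_sq A)

private lemma ellSecant (b p q x : ℝ) (hpq : p^2+q^2 = 1) (hx : x^2 ≤ 1) :
    Real.sqrt (((1+b^2)/2*p - (1-b^2)/2*x)^2 + b^2*q^2)
      ≤ (1+b^2)/2 - (1-b^2)/2*(x*p) := by
  have hp1 : p^2 ≤ 1 := by nlinarith [sq_nonneg q]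
  have h0 : 0 ≤ (1+b^2)/2 - (1-b^2)/2*(x*p) := by
    nlinarith [sq_nonneg (x*p-1), sq_nonneg (x*p+1), sq_nonneg (x-p), sq_nonneg (x+p), sq_nonneg b]
  rw [show (1+b^2)/2 - (1-b^2)/2*(x*p)
      = Real.sqrt (((1+b^2)/2 - (1-b^2)/2*(x*p))^2) from (Real.sqrt_sq h0).symm]
  apply Real.sqrt_le_sqrt
  have key : ((1+b^2)/2 - (1-b^2)/2*(x*p))^2 - ((((1+b^2)/2*p - (1-b^2)/2*x)^2 + b^2*q^2))
      = (1-b^2)^2/4 * q^2 * (1-x^2) := by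
    linear_combination (-(1-b^2)^2/4*(1-x^2) - b^2) * hpq
  nlinarith [mul_nonneg (mul_nonneg (sq_nonneg ((1-b^2)/2)) (sq_nonneg q)) (sub_nonneg.2 hx)]

private lemma ellLowerB (b p q x : ℝ) (hb0 : 0 < b) (hb1 : b ≤ 1) (hpq : p^2+q^2=1)
    (hx : x^2 ≤ 1) :
    (1+b^2)/2 - (1-b^2)/2*(x*p)
      ≤ (1+b^2)/(2*b) * Real.sqrt (((1+b^2)/2*p - (1-b^2)/2*x)^2 + b^2*q^2) := by
  have hp1 : p^2 ≤ 1 := by nlinarith [sq_nonneg q]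
  have h0 : 0 ≤ (1+b^2)/2 - (1-b^2)/2*(x*p) := by
    nlinarith [sq_nonneg (x*p-1), sq_nonneg (x*p+1), sq_nonneg (x-p), sq_nonneg (x+p), sq_nonneg b]
  have hF : (0:ℝ) ≤ ((1+b^2)/2)^2*p^2 + ((1+b^2)/2)^2*x^2 - (1-b^2)*((1+b^2)/2)*p*x
      - b^2*p^2*x^2 := by
    have t1 : (0:ℝ) ≤ b^2/4*(p^2-x^2)^2 := by positivity
    have t2 : (0:ℝ) ≤ (1-b^2)*(1+b^2)/4*(p-x)^2 := by
      apply mul_nonneg _ (sq_nonneg _)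
      nlinarith [mul_nonneg (sub_nonneg.2 hb1) (by linarith : (0:ℝ) ≤ 1+b)]
    have t3 : (0:ℝ) ≤ b^2/4*(p^2+x^2)*(2*(1+b^2)-(p^2+x^2)) := by
      apply mul_nonneg (by positivity); nlinarith
    nlinarith [t1, t2, t3]
  have hid : ((1+b^2)/2)^2 * (((1+b^2)/2*p - (1-b^2)/2*x)^2 + b^2*q^2)
      - (b*((1+b^2)/2 - (1-b^2)/2*(x*p)))^2
      = (1-b^2)^2/4 * (((1+b^2)/2)^2*p^2 + ((1+b^2)/2)^2*x^2
        - (1-b^2)*((1+b^2)/2)*p*x - b^2*p^2*x^2) := by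
    linear_combination (((1+b^2)/2)^2*b^2) * hpq
  have key : (b*((1+b^2)/2 - (1-b^2)/2*(x*p)))^2
      ≤ ((1+b^2)/2)^2 * (((1+b^2)/2*p - (1-b^2)/2*x)^2 + b^2*q^2) := by
    nlinarith [mul_nonneg (by positivity : (0:ℝ) ≤ (1-b^2)^2/4) hF]
  have hs := Real.sqrt_le_sqrt key
  rw [Real.sqrt_sq (by positivity), Real.sqrt_mul (by positivity : (0:ℝ) ≤ ((1+b^2)/2)^2),
    Real.sqrt_sq (by positivity : (0:ℝ) ≤ (1+b^2)/2)] at hs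
  rw [show (1+b^2)/(2*b) * Real.sqrt (((1+b^2)/2*p - (1-b^2)/2*x)^2 + b^2*q^2)
      = ((1+b^2)/2 * Real.sqrt (((1+b^2)/2*p - (1-b^2)/2*x)^2 + b^2*q^2))/b by ring,
    le_div_iff₀ hb0]
  nlinarith [hs]

private lemma ellSinId1 (u1 u2 u3 u4 : ℝ) :
    Real.sin (u2-u1) * Real.sin (u4-u3) + Real.sin (u4-u1) * Real.sin (u3-u2)
      = Real.sin (u3-u1) * Real.sin (u4-u2) := by
  simp only [Real.sin_sub, Real.cos_sub]; ring

private lemma ellSinId2 (u1 u2 u3 u4 : ℝ) :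
    Real.sin (u2-u1) * Real.sin (u4-u3) * Real.cos (u3+u4-u1-u2)
      + Real.sin (u4-u1) * Real.sin (u3-u2) * Real.cos (u2+u3-u1-u4)
      = Real.sin (u3-u1) * Real.sin (u4-u2) * Real.cos (u2+u4-u1-u3) := by
  simp only [Real.sin_sub, Real.cos_sub, Real.sin_add, Real.cos_add]; ring

private lemma ellKeyIneq (b t1 t2 t3 t4 : ℝ) (hb0 : 0 < b) (hb1 : b ≤ 1)
    (o12 : t1 < t2) (o23 : t2 < t3) (o34 : t3 < t4) (ht : t4 - t1 < 2*π) :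
    Real.sqrt ((Real.cos t1 - Real.cos t2)^2 + (b*Real.sin t1 - b*Real.sin t2)^2) *
      Real.sqrt ((Real.cos t3 - Real.cos t4)^2 + (b*Real.sin t3 - b*Real.sin t4)^2)
    + Real.sqrt ((Real.cos t1 - Real.cos t4)^2 + (b*Real.sin t1 - b*Real.sin t4)^2) *
      Real.sqrt ((Real.cos t2 - Real.cos t3)^2 + (b*Real.sin t2 - b*Real.sin t3)^2)
    ≤ (1+b^2)/(2*b) *
      (Real.sqrt ((Real.cos t1 - Real.cos t3)^2 + (b*Real.sin t1 - b*Real.sin t3)^2) *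
       Real.sqrt ((Real.cos t2 - Real.cos t4)^2 + (b*Real.sin t2 - b*Real.sin t4)^2)) := by
  have hb2 : b^2 ≤ 1 := by nlinarith
  set m : ℝ := (t1+t2+t3+t4)/2 with hm
  set A : ℝ := (t3+t4-t1-t2)/2 with hA
  set B : ℝ := (t2+t3-t1-t4)/2 with hB
  set Γ : ℝ := (t2+t4-t1-t3)/2 with hΓ
  set s12 : ℝ := Real.sin ((t2-t1)/2) with hs12d
  set s34 : ℝ := Real.sin ((t4-t3)/2) with hs34d
  set s14 : ℝ := Real.sin ((t4-t1)/2) with hs14d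
  set s23 : ℝ := Real.sin ((t3-t2)/2) with hs23d
  set s13 : ℝ := Real.sin ((t3-t1)/2) with hs13d
  set s24 : ℝ := Real.sin ((t4-t2)/2) with hs24d
  set fA : ℝ := Real.sqrt (((1+b^2)/2 * Real.cos m - (1-b^2)/2 * Real.cos A)^2
      + b^2 * Real.sin m ^ 2) with hfA
  set fB : ℝ := Real.sqrt (((1+b^2)/2 * Real.cos m - (1-b^2)/2 * Real.cos B)^2
      + b^2 * Real.sin m ^ 2) with hfB
  set fΓ : ℝ := Real.sqrt (((1+b^2)/2 * Real.cos m - (1-b^2)/2 * Real.cos Γ)^2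
      + b^2 * Real.sin m ^ 2) with hfΓ
  rw [ellDform b t1 t2 (by linarith) (by linarith), ellDform b t3 t4 (by linarith) (by linarith),
      ellDform b t1 t4 (by linarith) (by linarith), ellDform b t2 t3 (by linarith) (by linarith),
      ellDform b t1 t3 (by linarith) (by linarith), ellDform b t2 t4 (by linarith) (by linarith)]
  have e1 : Real.sqrt ((1+b^2)/2 - (1-b^2)/2 * Real.cos (t1+t2))
      * Real.sqrt ((1+b^2)/2 - (1-b^2)/2 * Real.cos (t3+t4)) = fA := by
    have h := ellGsplit b m A hb2
    rw [show m - A = t1+t2 by rw [hm, hA]; ring, show m + A = t3+t4 by rw [hm, hA]; ring] at h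
    exact h
  have e2 : Real.sqrt ((1+b^2)/2 - (1-b^2)/2 * Real.cos (t1+t4))
      * Real.sqrt ((1+b^2)/2 - (1-b^2)/2 * Real.cos (t2+t3)) = fB := by
    have h := ellGsplit b m B hb2
    rw [show m - B = t1+t4 by rw [hm, hB]; ring, show m + B = t2+t3 by rw [hm, hB]; ring] at h
    exact h
  have e3 : Real.sqrt ((1+b^2)/2 - (1-b^2)/2 * Real.cos (t1+t3))
      * Real.sqrt ((1+b^2)/2 - (1-b^2)/2 * Real.cos (t2+t4)) = fΓ := by
    have h := ellGsplit b m Γ hb2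
    rw [show m - Γ = t1+t3 by rw [hm, hΓ]; ring, show m + Γ = t2+t4 by rw [hm, hΓ]; ring] at h
    exact h
  have E1 : (2*s12*Real.sqrt ((1+b^2)/2 - (1-b^2)/2 * Real.cos (t1+t2)))
      * (2*s34*Real.sqrt ((1+b^2)/2 - (1-b^2)/2 * Real.cos (t3+t4)))
      = 4*(s12*s34)*fA := by rw [← e1]; ring
  have E2 : (2*s14*Real.sqrt ((1+b^2)/2 - (1-b^2)/2 * Real.cos (t1+t4)))
      * (2*s23*Real.sqrt ((1+b^2)/2 - (1-b^2)/2 * Real.cos (t2+t3)))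
      = 4*(s14*s23)*fB := by rw [← e2]; ring
  have E3 : (2*s13*Real.sqrt ((1+b^2)/2 - (1-b^2)/2 * Real.cos (t1+t3)))
      * (2*s24*Real.sqrt ((1+b^2)/2 - (1-b^2)/2 * Real.cos (t2+t4)))
      = 4*(s13*s24)*fΓ := by rw [← e3]; ring
  rw [E1, E2, E3]
  have hπ := Real.pi_pos
  have hs12 : 0 ≤ s12 := Real.sin_nonneg_of_nonneg_of_le_pi (by linarith) (by linarith)
  have hs34 : 0 ≤ s34 := Real.sin_nonneg_of_nonneg_of_le_pi (by linarith) (by linarith)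
  have hs14 : 0 ≤ s14 := Real.sin_nonneg_of_nonneg_of_le_pi (by linarith) (by linarith)
  have hs23 : 0 ≤ s23 := Real.sin_nonneg_of_nonneg_of_le_pi (by linarith) (by linarith)
  have hs13 : 0 ≤ s13 := Real.sin_nonneg_of_nonneg_of_le_pi (by linarith) (by linarith)
  have hs24 : 0 ≤ s24 := Real.sin_nonneg_of_nonneg_of_le_pi (by linarith) (by linarith)
  have secA : fA ≤ (1+b^2)/2 - (1-b^2)/2*(Real.cos A * Real.cos m) := by
    rw [hfA]; exact ellSecant b (Real.cos m) (Real.sin m) (Real.cos A)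
      (Real.cos_sq_add_sin_sq m) (Real.cos_sq_le_one A)
  have secB : fB ≤ (1+b^2)/2 - (1-b^2)/2*(Real.cos B * Real.cos m) := by
    rw [hfB]; exact ellSecant b (Real.cos m) (Real.sin m) (Real.cos B)
      (Real.cos_sq_add_sin_sq m) (Real.cos_sq_le_one B)
  have lowΓ : (1+b^2)/2 - (1-b^2)/2*(Real.cos Γ * Real.cos m) ≤ (1+b^2)/(2*b) * fΓ := by
    rw [hfΓ]; exact ellLowerB b (Real.cos m) (Real.sin m) (Real.cos Γ) hb0 hb1
      (Real.cos_sq_add_sin_sq m) (Real.cos_sq_le_one Γ)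
  have hw1 : s12*s34 + s14*s23 = s13*s24 := by
    have h := ellSinId1 (t1/2) (t2/2) (t3/2) (t4/2)
    rw [show t2/2-t1/2 = (t2-t1)/2 by ring, show t4/2-t3/2 = (t4-t3)/2 by ring,
        show t4/2-t1/2 = (t4-t1)/2 by ring, show t3/2-t2/2 = (t3-t2)/2 by ring,
        show t3/2-t1/2 = (t3-t1)/2 by ring, show t4/2-t2/2 = (t4-t2)/2 by ring] at h
    exact h
  have hw2 : s12*s34*Real.cos A + s14*s23*Real.cos B = s13*s24*Real.cos Γ := by
    have h := ellSinId2 (t1/2) (t2/2) (t3/2) (t4/2)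
    rw [show t2/2-t1/2 = (t2-t1)/2 by ring, show t4/2-t3/2 = (t4-t3)/2 by ring,
        show t4/2-t1/2 = (t4-t1)/2 by ring, show t3/2-t2/2 = (t3-t2)/2 by ring,
        show t3/2-t1/2 = (t3-t1)/2 by ring, show t4/2-t2/2 = (t4-t2)/2 by ring,
        show t3/2+t4/2-t1/2-t2/2 = A by rw [hA]; ring,
        show t2/2+t3/2-t1/2-t4/2 = B by rw [hB]; ring,
        show t2/2+t4/2-t1/2-t3/2 = Γ by rw [hΓ]; ring] at h
    exact h
  calc 4*(s12*s34)*fA + 4*(s14*s23)*fB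
      ≤ 4*(s12*s34)*((1+b^2)/2 - (1-b^2)/2*(Real.cos A * Real.cos m))
        + 4*(s14*s23)*((1+b^2)/2 - (1-b^2)/2*(Real.cos B * Real.cos m)) := by
        have g1 : 0 ≤ 4*(s12*s34) := by positivity
        have g2 : 0 ≤ 4*(s14*s23) := by positivity
        exact add_le_add (mul_le_mul_of_nonneg_left secA g1) (mul_le_mul_of_nonneg_left secB g2)
    _ = 4*(s13*s24)*((1+b^2)/2 - (1-b^2)/2*(Real.cos Γ * Real.cos m)) := by
        linear_combination (4*((1+b^2)/2)) * hw1 - (2*(1-b^2)*Real.cos m) * hw2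
    _ ≤ 4*(s13*s24)*((1+b^2)/(2*b) * fΓ) := by
        apply mul_le_mul_of_nonneg_left lowΓ (by positivity)
    _ = (1+b^2)/(2*b) * (4*(s13*s24)*fΓ) := by ring

private lemma ellRle (b : ℝ) (hb0 : 0 < b) (hb1 : b ≤ 1) :
    (1+b^2)/(2*b) ≤ 1 / Real.sin (π * b / 2) := by
  have hπ := Real.pi_pos
  have hsin_pos : 0 < Real.sin (π*b/2) :=
    Real.sin_pos_of_pos_of_lt_pi (by positivity) (by nlinarith)
  have hkey : Real.sin (π*b/2) ≤ 2*b/(1+b^2) := by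
    rcases le_total b (1/2) with h | h
    · have h1 : Real.sin (π*b/2) ≤ π*b/2 := Real.sin_le (by positivity)
      have hpi : π < 3.15 := Real.pi_lt_d2
      refine h1.trans ?_
      rw [le_div_iff₀ (by positivity)]
      have hb2 : b^2 ≤ 1/4 := by nlinarith
      nlinarith [mul_lt_mul_of_pos_right hpi hb0,
        mul_lt_mul_of_pos_right hpi (by positivity : (0:ℝ) < b^3),
        mul_le_mul_of_nonneg_left hb2 (by positivity : (0:ℝ) ≤ 3.15*b),
        mul_le_mul_of_nonneg_left hb2 hb0.le]
    · have h2 : Real.sin (π*b/2) = Real.cos (π*(1-b)/2) := by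
        rw [← Real.cos_pi_div_two_sub]; congr 1; ring
      have hX : (0:ℝ) ≤ π*(1-b)/2 := by nlinarith
      have h3 : Real.cos (π*(1-b)/2) ≤ 1/Real.sqrt ((π*(1-b)/2)^2+1) :=
        Real.cos_le_one_div_sqrt_sq_add_one (by nlinarith) (by nlinarith)
      have hπ3 : (3:ℝ) ≤ π := Real.pi_gt_three.le
      have h3b : 3*b ≤ π*b := mul_le_mul_of_nonneg_right hπ3 hb0.le
      have hab : (1+b)*(1-b) ≤ π*b*(1-b) := by
        have hin : (0:ℝ) ≤ π*b - 1 - b := by linarith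
        nlinarith [mul_nonneg (by linarith : (0:ℝ) ≤ 1-b) hin]
      have h4 : (1+b^2)/(2*b) ≤ Real.sqrt ((π*(1-b)/2)^2+1) := by
        rw [show (1+b^2)/(2*b) = Real.sqrt (((1+b^2)/(2*b))^2) from
          (Real.sqrt_sq (by positivity)).symm]
        apply Real.sqrt_le_sqrt
        rw [div_pow, div_le_iff₀ (by positivity)]
        nlinarith [mul_self_le_mul_self (by nlinarith : (0:ℝ) ≤ (1+b)*(1-b)) hab]
      have h5 : 1/Real.sqrt ((π*(1-b)/2)^2+1) ≤ 1/((1+b^2)/(2*b)) :=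
        one_div_le_one_div_of_le (by positivity) h4
      rw [one_div_div] at h5
      rw [h2]
      exact h3.trans h5
  calc (1+b^2)/(2*b) = 1/(2*b/(1+b^2)) := (one_div_div _ _).symm
    _ ≤ 1/Real.sin (π*b/2) := one_div_le_one_div_of_le hsin_pos hkey

end Aux

private lemma ellNorm (ε x y : ℝ) :
    ‖ellipsePoint ε x - ellipsePoint ε y‖
      = Real.sqrt ((Real.cos x - Real.cos y)^2
        + (Real.sqrt (1-ε^2) * Real.sin x - Real.sqrt (1-ε^2) * Real.sin y)^2) := by
  have h0 : (ellipsePoint ε x - ellipsePoint ε y) 0 = Real.cos x - Real.cos y := by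
    simp [ellipsePoint]
  have h1 : (ellipsePoint ε x - ellipsePoint ε y) 1
      = Real.sqrt (1-ε^2) * Real.sin x - Real.sqrt (1-ε^2) * Real.sin y := by
    simp [ellipsePoint]
  rw [EuclideanSpace.norm_eq, Fin.sum_univ_two, h0, h1, Real.norm_eq_abs, Real.norm_eq_abs,
    sq_abs, sq_abs]

theorem stmt2 (ε : ℝ) (hε0 : 0 ≤ ε) (hε1 : ε < 1) :
    ellipsePtolemyConst ε ≤ 1 / Real.sin (π * Real.sqrt (1 - ε ^ 2) / 2) := by
  have hε2 : 0 < 1 - ε^2 := by nlinarith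
  set b : ℝ := Real.sqrt (1 - ε ^ 2) with hbdef
  have hb0 : 0 < b := Real.sqrt_pos.2 hε2
  have hb1 : b ≤ 1 := Real.sqrt_le_one.2 (by nlinarith)
  have hπ := Real.pi_pos
  have hsin_pos : 0 < Real.sin (π*b/2) :=
    Real.sin_pos_of_pos_of_lt_pi (by positivity) (by nlinarith)
  apply Real.sSup_le
  · rintro r ⟨θ1, θ2, θ3, θ4, h0, h12, h23, h34, h4, rfl⟩
    have hGpos : ∀ z : ℝ, 0 < (1+b^2)/2 - (1-b^2)/2 * Real.cos z := by
      intro z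
      have hbb : (0:ℝ) ≤ 1 - b^2 := by nlinarith
      nlinarith [mul_pos hb0 hb0,
        mul_nonneg hbb (by nlinarith [Real.cos_le_one z] : (0:ℝ) ≤ 1 - Real.cos z)]
    have hd13 : 0 < ‖ellipsePoint ε θ1 - ellipsePoint ε θ3‖ := by
      rw [ellNorm, ← hbdef, ellDform b θ1 θ3 (by linarith) (by linarith)]
      have hs : 0 < Real.sin ((θ3-θ1)/2) :=
        Real.sin_pos_of_pos_of_lt_pi (by linarith) (by linarith)
      have hg : 0 < Real.sqrt ((1+b^2)/2 - (1-b^2)/2 * Real.cos (θ1+θ3)) :=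
        Real.sqrt_pos.2 (hGpos _)
      positivity
    have hd24 : 0 < ‖ellipsePoint ε θ2 - ellipsePoint ε θ4‖ := by
      rw [ellNorm, ← hbdef, ellDform b θ2 θ4 (by linarith) (by linarith)]
      have hs : 0 < Real.sin ((θ4-θ2)/2) :=
        Real.sin_pos_of_pos_of_lt_pi (by linarith) (by linarith)
      have hg : 0 < Real.sqrt ((1+b^2)/2 - (1-b^2)/2 * Real.cos (θ2+θ4)) :=
        Real.sqrt_pos.2 (hGpos _)
      positivity
    have hmain : ptolemyRatio (ellipsePoint ε θ1) (ellipsePoint ε θ2) (ellipsePoint ε θ3)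
        (ellipsePoint ε θ4) ≤ (1+b^2)/(2*b) := by
      rw [ptolemyRatio, div_le_iff₀ (mul_pos hd13 hd24)]
      rw [ellNorm, ellNorm, ellNorm, ellNorm, ellNorm, ellNorm, ← hbdef]
      have := ellKeyIneq b θ1 θ2 θ3 θ4 hb0 hb1 h12 h23 h34 (by linarith)
      linarith [this]
    exact hmain.trans (ellRle b hb0 hb1)
  · exact le_of_lt (by positivity)
end

section
/- Fix 0 ≤ ε < 1 and set b = √(1 − ε²). The four points v₁ = (0, b), v₂ = (−1, −b), v₃ = (0, −b), v₄ = (1, −b) all lie on the rectangle boundary R_ε = {(x, y) : max(|x|, |y|/b) = 1}, and their Ptolemy ratio equals √(1 + 4(1 − ε²))/(2√(1 − ε²)). -/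
open Real

/-- The boundary of the rectangle `[-1,1] × [-√(1-ε²), √(1-ε²)]`:
the set `max(|x|, |y|/√(1-ε²)) = 1`. -/
def rectBoundary (ε : ℝ) : Set (EuclideanSpace ℝ (Fin 2)) :=
  {v | max |v 0| (|v 1| / Real.sqrt (1 - ε ^ 2)) = 1}

lemma mynorm (x : EuclideanSpace ℝ (Fin 2)) : ‖x‖ = Real.sqrt ((x 0)^2 + (x 1)^2) := by
  rw [EuclideanSpace.norm_eq]; simp [Fin.sum_univ_two, sq_abs]

lemma ratio_calc (b : ℝ) (hb : 0 < b) :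
    ptolemyRatio !₂[0, b] !₂[-1, -b] !₂[0, -b] !₂[1, -b] = Real.sqrt (1 + 4*b^2) / (2*b) := by
  rw [ptolemyRatio]
  simp only [mynorm, PiLp.sub_apply, PiLp.toLp_apply, Matrix.cons_val_zero, Matrix.cons_val_one, Matrix.head_cons]
  rw [show (0:ℝ) - -1 = 1 by ring, show b - -b = 2*b by ring, show (0:ℝ)-0 = 0 by ring,
    show (0:ℝ)-1 = -1 by ring, show -b - -b = 0 by ring, show (-1:ℝ)-0=-1 by ring,
    show (-1:ℝ)-1 = -2 by ring]
  rw [show (1:ℝ)^2 + (2*b)^2 = 1+4*b^2 by ring, show (-1:ℝ)^2+(0:ℝ)^2 = 1 by ring,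
    show (0:ℝ)^2 + (2*b)^2 = (2*b)^2 by ring, show (-1:ℝ)^2 + (2*b)^2 = 1+4*b^2 by ring,
    show (-2:ℝ)^2 + (0:ℝ)^2 = 2^2 by ring]
  rw [Real.sqrt_one, Real.sqrt_sq (by positivity), Real.sqrt_sq (by norm_num)]
  field_simp
  ring

theorem stmt10 (ε : ℝ) (hε0 : 0 ≤ ε) (hε1 : ε < 1) :
    (!₂[0, Real.sqrt (1 - ε ^ 2)] : EuclideanSpace ℝ (Fin 2)) ∈ rectBoundary ε ∧
    (!₂[-1, -Real.sqrt (1 - ε ^ 2)] : EuclideanSpace ℝ (Fin 2)) ∈ rectBoundary ε ∧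
    (!₂[0, -Real.sqrt (1 - ε ^ 2)] : EuclideanSpace ℝ (Fin 2)) ∈ rectBoundary ε ∧
    (!₂[1, -Real.sqrt (1 - ε ^ 2)] : EuclideanSpace ℝ (Fin 2)) ∈ rectBoundary ε ∧
    ptolemyRatio !₂[0, Real.sqrt (1 - ε ^ 2)] !₂[-1, -Real.sqrt (1 - ε ^ 2)]
        !₂[0, -Real.sqrt (1 - ε ^ 2)] !₂[1, -Real.sqrt (1 - ε ^ 2)] =
      Real.sqrt (1 + 4 * (1 - ε ^ 2)) / (2 * Real.sqrt (1 - ε ^ 2)) := by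
  have h1 : (0:ℝ) < 1 - ε ^ 2 := by nlinarith
  set b := Real.sqrt (1 - ε ^ 2) with hbdef
  have hb : 0 < b := Real.sqrt_pos.mpr h1
  have hb2 : b ^ 2 = 1 - ε ^ 2 := Real.sq_sqrt h1.le
  have habs : |b| / b = 1 := by rw [abs_of_pos hb, div_self hb.ne']
  refine ⟨?_, ?_, ?_, ?_, ?_⟩
  · show max |(0:ℝ)| (|b| / b) = 1
    simp [habs]
  · show max |(-1:ℝ)| (|-b| / b) = 1
    rw [show |(-b)| = |b| from abs_neg b, habs]; simp
  · show max |(0:ℝ)| (|-b| / b) = 1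
    rw [show |(-b)| = |b| from abs_neg b, habs]; simp
  · show max |(1:ℝ)| (|-b| / b) = 1
    rw [show |(-b)| = |b| from abs_neg b, habs]; simp
  · rw [ratio_calc b hb, hb2]
end
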